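/- Proposition (generalized Delannoy triangle is totally positive). Let a, b, c be nonnegative real numbers. Then the generalized Delannoy triangle D_w(a,b,c) = [d n k]_{n,k≥0} is totally positive. -/
import Mathlib

open Finset

/-- An `ℕ × ℕ` matrix of real numbers is *totally positive* if every minor
taken along strictly increasing row and column indices is nonnegative. -/
def TPReal (A : ℕ → ℕ → ℝ) : Prop :=
  ∀ r : ℕ, 1 ≤ r → ∀ ρ κ : Fin r → ℕ, StrictMono ρ → StrictMono κ →
    0 ≤ (Matrix.of fun i j : Fin r => A (ρ i) (κ j)).det

/-- The Toeplitz matrix of a sequence: `𝒯(c) i j = c (i - j)` for `i ≥ j`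
and `0` otherwise. -/
def toeplitz (c : ℕ → ℝ) : ℕ → ℕ → ℝ :=
  fun i j => if j ≤ i then c (i - j) else 0

/-- The generalized Delannoy triangle `D_w(a,b,c)`:
`d 0 0 = 1`, `d 0 k = 0` for `k ≥ 1`, and for `n ≥ 1`,
`d n k = a·d (n-1) (k-1) + c·d (n-2) (k-1) + b·d (n-1) k`,
where any term with a negative index vanishes. -/
def genDelannoy (a b c : ℝ) : ℕ → ℕ → ℝ
  | 0, 0 => 1
  | 0, _ + 1 => 0
  | n + 1, 0 => b * genDelannoy a b c n 0
  | 1, k + 1 => a * genDelannoy a b c 0 k + b * genDelannoy a b c 0 (k + 1)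
  | n + 2, k + 1 =>
      a * genDelannoy a b c (n + 1) k + c * genDelannoy a b c n k +
        b * genDelannoy a b c (n + 1) (k + 1)
  termination_by n k => (k, n)

section Auxiliary

open Matrix Equiv

/-- A permutation of `Fin r` that is strictly monotone is the identity. -/
lemma perm_strictMono_eq_id {r : ℕ} (σ : Equiv.Perm (Fin r)) (h : StrictMono ⇑σ) :
    ⇑σ = id := by
  haveI : WellFoundedLT (Fin r) := inferInstance
  have := @StrictMono.range_inj (Fin r) (Fin r) _ _ this ⇑σ id h strictMono_id
  exact this.1 (by simp [Set.range_id, Set.range_eq_univ.2 σ.surjective])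

/-- Staircase lemma: if the nonzero pattern of `M` is weakly monotone
(nonzero entries in lower rows lie weakly to the right), then
`det M` is the product of the diagonal entries. -/
lemma det_staircase {r : ℕ} (M : Matrix (Fin r) (Fin r) ℝ)
    (h : ∀ i i' j j' : Fin r, i < i' → M i j ≠ 0 → M i' j' ≠ 0 → j ≤ j') :
    M.det = ∏ i, M i i := by
  rw [Matrix.det_apply']
  rw [Finset.sum_eq_single (1 : Equiv.Perm (Fin r))]
  · simp
  · intro σ _ hσ
    by_contra hne
    have hnz : ∀ i, M (σ i) i ≠ 0 := by
      intro i hi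
      exact hne (by rw [show (∏ x, M (σ x) x) = 0 from Finset.prod_eq_zero (Finset.mem_univ i) hi, mul_zero])
    have hsm : StrictMono ⇑σ := by
      intro i i' hii
      rcases lt_trichotomy (σ i) (σ i') with h1 | h1 | h1
      · exact h1
      · exact absurd (σ.injective h1) (ne_of_lt hii)
      · exact absurd (h _ _ _ _ h1 (hnz i') (hnz i)) (by omega)
    exact hσ (Equiv.ext fun i => by rw [show ⇑σ = id from perm_strictMono_eq_id σ hsm]; rfl)
  · simp

noncomputable instance {r m : ℕ} : DecidablePred (fun g : Fin r → Fin m => StrictMono g) :=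
  Classical.decPred _

/-- Cauchy–Binet. -/
lemma cauchyBinet {r m : ℕ} (A : Matrix (Fin r) (Fin m) ℝ) (B : Matrix (Fin m) (Fin r) ℝ) :
    (A * B).det = ∑ g ∈ Finset.univ.filter (fun g : Fin r → Fin m => StrictMono g),
      (A.submatrix id g).det * (B.submatrix g id).det := by
  classical
  have step1 : (A * B).det =
      ∑ f : Fin r → Fin m, (∏ i, B (f i) i) * (A.submatrix id f).det := by
    simp only [Matrix.det_apply', Matrix.mul_apply, Finset.prod_univ_sum, Finset.mul_sum,
      Fintype.piFinset_univ, Matrix.submatrix_apply, id_eq]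
    rw [Finset.sum_comm]
    refine Finset.sum_congr rfl fun f _ => Finset.sum_congr rfl fun σ _ => ?_
    rw [Finset.prod_mul_distrib]
    ring
  rw [step1]
  rw [← Finset.sum_filter_add_sum_filter_not Finset.univ (fun f : Fin r → Fin m => Function.Injective f)]
  have step2 : ∑ f ∈ Finset.univ.filter (fun f : Fin r → Fin m => ¬ Function.Injective f),
      (∏ i, B (f i) i) * (A.submatrix id f).det = 0 := by
    refine Finset.sum_eq_zero fun f hf => ?_
    simp only [Finset.mem_filter] at hf
    rw [Function.not_injective_iff] at hf
    obtain ⟨i, j, hij, hne⟩ := hf.2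
    rw [Matrix.det_zero_of_column_eq hne (fun k => by simp [hij]), mul_zero]
  rw [step2, add_zero]
  -- now partition the injective functions
  have key : ∀ g : Fin r → Fin m, StrictMono g →
      ∑ σ : Equiv.Perm (Fin r), (∏ i, B (g (σ i)) i) * (A.submatrix id (g ∘ ⇑σ)).det
        = (A.submatrix id g).det * (B.submatrix g id).det := by
    intro g _
    have hperm : ∀ σ : Equiv.Perm (Fin r),
        (A.submatrix id (g ∘ ⇑σ)).det = Equiv.Perm.sign σ * (A.submatrix id g).det := by
      intro σ
      have : A.submatrix id (g ∘ ⇑σ) = (A.submatrix id g).submatrix id ⇑σ := rfl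
      rw [this, Matrix.det_permute']
    calc ∑ σ : Equiv.Perm (Fin r), (∏ i, B (g (σ i)) i) * (A.submatrix id (g ∘ ⇑σ)).det
        = ∑ σ : Equiv.Perm (Fin r),
            (A.submatrix id g).det * (Equiv.Perm.sign σ * ∏ i, (B.submatrix g id) (σ i) i) := by
          refine Finset.sum_congr rfl fun σ _ => ?_
          rw [hperm σ]
          simp only [Matrix.submatrix_apply, id_eq]
          ring
      _ = (A.submatrix id g).det * (B.submatrix g id).det := by
          rw [← Finset.mul_sum]
          congr 1
          exact (Matrix.det_apply' _).symm
  have hsum : ∑ g ∈ Finset.univ.filter (fun g : Fin r → Fin m => StrictMono g),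
      (A.submatrix id g).det * (B.submatrix g id).det
      = ∑ p ∈ (Finset.univ.filter (fun g : Fin r → Fin m => StrictMono g)) ×ˢ
          (Finset.univ : Finset (Equiv.Perm (Fin r))),
          (∏ i, B ((p.1 ∘ ⇑p.2) i) i) * (A.submatrix id (p.1 ∘ ⇑p.2)).det := by
    rw [Finset.sum_product]
    refine Finset.sum_congr rfl fun g hg => ?_
    rw [← key g (by simpa using hg)]
    rfl
  rw [hsum]
  have hcancel : ∀ f : Fin r → Fin m,
      (f ∘ ⇑(Tuple.sort f)) ∘ ⇑(Tuple.sort f)⁻¹ = f := by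
    intro f
    funext x
    simp [Function.comp]
  refine Finset.sum_nbij' (fun f => (f ∘ ⇑(Tuple.sort f), (Tuple.sort f)⁻¹))
    (fun p => p.1 ∘ ⇑p.2) ?_ ?_ ?_ ?_ ?_
  · intro f hf
    simp only [Finset.mem_filter, Finset.mem_univ, true_and] at hf
    simp only [Finset.mem_product, Finset.mem_filter, Finset.mem_univ, true_and, and_true]
    exact (Tuple.monotone_sort f).strictMono_of_injective (hf.comp (Tuple.sort f).injective)
  · intro p hp
    simp only [Finset.mem_product, Finset.mem_filter, Finset.mem_univ, true_and, and_true] at hp ⊢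
    exact hp.injective.comp p.2.injective
  · intro f hf
    exact hcancel f
  · intro p hp
    simp only [Finset.mem_product, Finset.mem_filter, Finset.mem_univ, true_and, and_true] at hp
    obtain ⟨g, σ⟩ := p
    have hg : StrictMono g := hp
    have hmono : StrictMono ((g ∘ ⇑σ) ∘ ⇑(Tuple.sort (g ∘ ⇑σ))) :=
      (Tuple.monotone_sort (g ∘ ⇑σ)).strictMono_of_injective
        ((hg.injective.comp σ.injective).comp (Tuple.sort (g ∘ ⇑σ)).injective)
    set h0 := Tuple.sort (g ∘ ⇑σ) with hh0
    have hcomp : (g ∘ ⇑σ) ∘ ⇑h0 = g ∘ ⇑(σ * h0) := rfl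
    haveI hwf : WellFoundedLT (Fin r) := inferInstance
    have hrange : Set.range (g ∘ ⇑(σ * h0)) = Set.range g := by
      rw [Set.range_comp, Set.range_eq_univ.2 (σ * h0).surjective, Set.image_univ]
    have heq : g ∘ ⇑(σ * h0) = g :=
      (@StrictMono.range_inj (Fin r) (Fin m) _ _ hwf _ g (hcomp ▸ hmono) hg).1 hrange
    have hπ : σ * h0 = 1 := Equiv.ext fun x => hg.injective (congrFun heq x)
    have hinv : h0 = σ⁻¹ := eq_inv_of_mul_eq_one_right hπ
    have h1 : (g ∘ ⇑σ) ∘ ⇑h0 = g := by rw [hcomp, heq]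
    have h2 : h0⁻¹ = σ := by rw [hinv, inv_inv]
    simp only [Prod.mk.injEq]
    exact ⟨h1, h2⟩
  · intro f hf
    show _ = (∏ i, B (((f ∘ ⇑(Tuple.sort f)) ∘ ⇑(Tuple.sort f)⁻¹) i) i) * _
    rw [hcancel f]

/-- Minors of the geometric Toeplitz matrix are nonnegative. -/
lemma toeplitz_pow_minor_nonneg (b : ℝ) (hb : 0 ≤ b) {r : ℕ} (ρ κ : Fin r → ℕ)
    (hρ : StrictMono ρ) (hκ : StrictMono κ) :
    0 ≤ (Matrix.of fun i j : Fin r => toeplitz (fun n => b ^ n) (ρ i) (κ j)).det := by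
  classical
  have hpred : ∀ i : Fin r, ((i : ℕ) - 1) < r :=
    fun i => Nat.lt_of_le_of_lt (Nat.sub_le _ _) i.isLt
  set M : Matrix (Fin r) (Fin r) ℝ :=
    Matrix.of fun i j : Fin r => toeplitz (fun n => b ^ n) (ρ i) (κ j) with hM
  have hMval : ∀ i j : Fin r, M i j = if κ j ≤ ρ i then b ^ (ρ i - κ j) else 0 :=
    fun i j => rfl
  set E : Matrix (Fin r) (Fin r) ℝ :=
    Matrix.of fun i k : Fin r => if (k : ℕ) + 1 = (i : ℕ) then -(b ^ (ρ i - ρ k)) else 0 with hE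
  have htri : (1 + E).BlockTriangular OrderDual.toDual := by
    intro i k hik
    have hik' : (i : ℕ) < (k : ℕ) := hik
    have h1 : (1 : Matrix (Fin r) (Fin r) ℝ) i k = 0 :=
      Matrix.one_apply_ne (fun h => by rw [h] at hik'; omega)
    have h2 : E i k = 0 := by
      simp only [hE, Matrix.of_apply]
      rw [if_neg (by omega)]
    rw [Matrix.add_apply, h1, h2, add_zero]
  have hdetN : (1 + E).det = 1 := by
    rw [Matrix.det_of_lowerTriangular _ htri]
    refine Finset.prod_eq_one fun i _ => ?_
    have h2 : E i i = 0 := by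
      simp only [hE, Matrix.of_apply]
      rw [if_neg (by omega)]
    rw [Matrix.add_apply, h2, Matrix.one_apply_eq, add_zero]
  set C : Matrix (Fin r) (Fin r) ℝ :=
    Matrix.of fun i j : Fin r =>
      if κ j ≤ ρ i ∧ (∀ i₀ : Fin r, (i₀ : ℕ) + 1 = (i : ℕ) → ρ i₀ < κ j)
      then b ^ (ρ i - κ j) else 0 with hC
  have hCval : ∀ i j : Fin r, C i j =
      if κ j ≤ ρ i ∧ (∀ i₀ : Fin r, (i₀ : ℕ) + 1 = (i : ℕ) → ρ i₀ < κ j)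
      then b ^ (ρ i - κ j) else 0 := fun i j => rfl
  have hCeq : (1 + E) * M = C := by
    ext i j
    rw [Matrix.add_mul, Matrix.one_mul, Matrix.add_apply, hCval]
    by_cases hi : 0 < (i : ℕ)
    · have hEM : (E * M) i j =
          -(b ^ (ρ i - ρ ⟨(i : ℕ) - 1, hpred i⟩) * M ⟨(i : ℕ) - 1, hpred i⟩ j) := by
        rw [Matrix.mul_apply]
        rw [Finset.sum_eq_single (⟨(i : ℕ) - 1, hpred i⟩ : Fin r)]
        · simp only [hE, Matrix.of_apply]
          rw [if_pos (show ((i : ℕ) - 1) + 1 = (i : ℕ) from by omega)]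
          ring
        · intro k _ hk
          simp only [hE, Matrix.of_apply]
          rw [if_neg (fun hc => hk (Fin.ext (show (k : ℕ) = (i : ℕ) - 1 from by omega)))]
          ring
        · intro hmem; exact absurd (Finset.mem_univ _) hmem
      rw [hEM, hMval, hMval]
      have hρle : ρ ⟨(i : ℕ) - 1, hpred i⟩ ≤ ρ i :=
        hρ.monotone (by rw [Fin.le_def]; exact Nat.sub_le _ _)
      have hcond : (∀ i₁ : Fin r, (i₁ : ℕ) + 1 = (i : ℕ) → ρ i₁ < κ j) ↔
          ρ ⟨(i : ℕ) - 1, hpred i⟩ < κ j := by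
        constructor
        · intro hf; exact hf _ (show ((i : ℕ) - 1) + 1 = (i : ℕ) from by omega)
        · intro hf i₁ hi₁
          have : i₁ = ⟨(i : ℕ) - 1, hpred i⟩ := Fin.ext (show (i₁ : ℕ) = (i : ℕ) - 1 from by omega)
          rwa [this]
      by_cases h2 : κ j ≤ ρ ⟨(i : ℕ) - 1, hpred i⟩
      · rw [if_pos h2, if_pos (h2.trans hρle), if_neg (fun hc => by
          have := hcond.1 hc.2; omega)]
        have hpow : b ^ (ρ i - ρ ⟨(i : ℕ) - 1, hpred i⟩) * b ^ (ρ ⟨(i : ℕ) - 1, hpred i⟩ - κ j)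
            = b ^ (ρ i - κ j) := by
          rw [← pow_add]
          congr 1
          omega
        rw [hpow]
        ring
      · rw [if_neg h2]
        by_cases h3 : κ j ≤ ρ i
        · rw [if_pos h3, if_pos ⟨h3, hcond.2 (by omega)⟩]; ring
        · rw [if_neg h3, if_neg (fun hc => h3 hc.1)]; ring
    · have hEM : (E * M) i j = 0 := by
        rw [Matrix.mul_apply]
        refine Finset.sum_eq_zero fun k _ => ?_
        simp only [hE, Matrix.of_apply]
        rw [if_neg (by omega)]
        ring
      rw [hEM, hMval]
      have hcond : ∀ i₁ : Fin r, (i₁ : ℕ) + 1 = (i : ℕ) → ρ i₁ < κ j :=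
        fun i₁ h₁ => absurd h₁ (by omega)
      by_cases h3 : κ j ≤ ρ i
      · rw [if_pos h3, if_pos ⟨h3, hcond⟩]; ring
      · rw [if_neg h3, if_neg (fun hc => h3 hc.1)]; ring
  have hdet : M.det = C.det := by
    rw [← hCeq, Matrix.det_mul, hdetN, one_mul]
  rw [hdet, det_staircase C (by
    intro i i' j j' hii hCij hCij'
    have hii' : (i : ℕ) < (i' : ℕ) := hii
    by_contra hjj
    have hjj' : j' < j := lt_of_not_ge hjj
    rw [hCval] at hCij hCij'
    have h1 : κ j ≤ ρ i := by
      by_contra hc; exact hCij (by rw [if_neg (fun hx => hc hx.1)])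
    have h2 : κ j' ≤ ρ i' ∧ ∀ i₀ : Fin r, (i₀ : ℕ) + 1 = (i' : ℕ) → ρ i₀ < κ j' := by
      by_contra hc; exact hCij' (by rw [if_neg hc])
    have h4 : ρ ⟨(i' : ℕ) - 1, hpred i'⟩ < κ j' :=
      h2.2 _ (show ((i' : ℕ) - 1) + 1 = (i' : ℕ) from by omega)
    have h5 : ρ i ≤ ρ ⟨(i' : ℕ) - 1, hpred i'⟩ :=
      hρ.monotone (by rw [Fin.le_def]; exact (show (i : ℕ) ≤ (i' : ℕ) - 1 from by omega))
    have h6 : κ j' < κ j := hκ hjj'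
    omega)]
  refine Finset.prod_nonneg fun i _ => ?_
  rw [hCval]
  split_ifs
  · exact pow_nonneg hb _
  · exact le_refl 0

noncomputable def delG (a b c : ℝ) : ℕ → ℕ → ℝ
  | 0, 0 => 1
  | 0, _ + 1 => 0
  | _ + 1, 0 => 0
  | 1, k + 1 => a * genDelannoy a b c 0 k
  | m + 2, k + 1 => a * genDelannoy a b c (m + 1) k + c * genDelannoy a b c m k

noncomputable def delAm (a c : ℝ) : ℕ → ℕ → ℝ := fun m p =>
  if p = 0 then (if m = 0 then 1 else 0)
  else if m = p then a else if m = p + 1 then c else 0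

noncomputable def delDm (a b c : ℝ) : ℕ → ℕ → ℝ
  | 0, 0 => 1
  | 0, _ + 1 => 0
  | _ + 1, 0 => 0
  | p + 1, k + 1 => genDelannoy a b c p k

lemma delDm_pos_pos (a b c : ℝ) (p k : ℕ) (hp : 0 < p) (hk : 0 < k) :
    delDm a b c p k = genDelannoy a b c (p - 1) (k - 1) := by
  obtain ⟨p', rfl⟩ : ∃ p', p = p' + 1 := ⟨p - 1, by omega⟩
  obtain ⟨k', rfl⟩ : ∃ k', k = k' + 1 := ⟨k - 1, by omega⟩
  rfl

lemma delDm_zero_right (a b c : ℝ) (p : ℕ) (hp : 0 < p) : delDm a b c p 0 = 0 := by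
  obtain ⟨p', rfl⟩ : ∃ p', p = p' + 1 := ⟨p - 1, by omega⟩
  rfl

lemma delDm_zero_left (a b c : ℝ) (k : ℕ) (hk : 0 < k) : delDm a b c 0 k = 0 := by
  obtain ⟨k', rfl⟩ : ∃ k', k = k' + 1 := ⟨k - 1, by omega⟩
  rfl

/-- the key single-step recurrence in the `b`-direction -/
lemma genDelannoy_step (a b c : ℝ) (n k : ℕ) :
    genDelannoy a b c (n + 1) k = b * genDelannoy a b c n k + delG a b c (n + 1) k := by
  match n, k with
  | n, 0 => simp [genDelannoy, delG]
  | 0, k + 1 => simp [genDelannoy, delG]; try ring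
  | n + 1, k + 1 => simp [genDelannoy, delG]; try ring

lemma genDelannoy_eq_sum (a b c : ℝ) (n k : ℕ) :
    genDelannoy a b c n k = ∑ m ∈ Finset.range (n + 1), b ^ (n - m) * delG a b c m k := by
  induction n with
  | zero =>
    rw [Finset.sum_range_one]
    match k with
    | 0 => simp [genDelannoy, delG]
    | k + 1 => simp [genDelannoy, delG]
  | succ n ih =>
    rw [Finset.sum_range_succ, genDelannoy_step a b c n k, ih]
    have : ∀ m ∈ Finset.range (n + 1), b ^ (n + 1 - m) * delG a b c m k
        = b * (b ^ (n - m) * delG a b c m k) := by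
      intro m hm
      rw [Finset.mem_range] at hm
      rw [show n + 1 - m = (n - m) + 1 from by omega, pow_succ]
      ring
    rw [Finset.sum_congr rfl this, ← Finset.mul_sum]
    simp
lemma delAm_eq_zero (a c : ℝ) {m p : ℕ}
    (h : ¬ ((p = 0 ∧ m = 0) ∨ (0 < p ∧ (m = p ∨ m = p + 1)))) : delAm a c m p = 0 := by
  simp only [delAm]
  by_cases hp : p = 0
  · rw [if_pos hp, if_neg (fun hm => h (Or.inl ⟨hp, hm⟩))]
  · rw [if_neg hp, if_neg (fun hm => h (Or.inr ⟨by omega, Or.inl hm⟩)),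
      if_neg (fun hm => h (Or.inr ⟨by omega, Or.inr hm⟩))]

lemma delG_eq_sum (a b c : ℝ) (m k M : ℕ) (hm : m ≤ M) :
    delG a b c m k = ∑ p ∈ Finset.range (M + 1), delAm a c m p * delDm a b c p k := by
  match m with
  | 0 =>
    rw [Finset.sum_eq_single 0]
    · have h1 : delAm a c 0 0 = 1 := by simp [delAm]
      rw [h1, one_mul]
      match k with
      | 0 => rfl
      | k + 1 => rfl
    · intro p _ hp
      rw [delAm_eq_zero a c (by omega), zero_mul]
    · intro h; exact absurd (Finset.mem_range.2 (by omega)) h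
  | 1 =>
    rw [Finset.sum_eq_single 1]
    · have h1 : delAm a c 1 1 = a := by simp [delAm]
      rw [h1]
      match k with
      | 0 => show delG a b c 1 0 = a * delDm a b c 1 0; simp [delG, delDm]
      | k + 1 => show delG a b c 1 (k+1) = a * delDm a b c 1 (k+1); simp [delG, delDm]
    · intro p _ hp
      rw [delAm_eq_zero a c (by omega), zero_mul]
    · intro h; exact absurd (Finset.mem_range.2 (by omega)) h
  | m + 2 =>
    rw [Finset.sum_eq_add_of_mem (m + 2) (m + 1)
      (Finset.mem_range.2 (by omega)) (Finset.mem_range.2 (by omega)) (by omega)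
      (fun p _ hp => ?_)]
    · have h1 : delAm a c (m + 2) (m + 2) = a := by simp [delAm]
      have h2 : delAm a c (m + 2) (m + 1) = c := by simp [delAm]
      rw [h1, h2]
      match k with
      | 0 => show delG a b c (m+2) 0 = _; simp [delG, delDm]
      | k + 1 => show delG a b c (m+2) (k+1) = _; simp [delG, delDm]; try ring
    · rcases hp with ⟨hp1, hp2⟩
      rw [delAm_eq_zero a c (by omega), zero_mul]

lemma delAm_nonneg (a c : ℝ) (ha : 0 ≤ a) (hc : 0 ≤ c) (m p : ℕ) : 0 ≤ delAm a c m p := by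
  simp only [delAm]
  split_ifs <;> first | exact zero_le_one | exact ha | exact hc | exact le_refl 0

lemma delAm_ne_zero (a c : ℝ) {m p : ℕ} (h : delAm a c m p ≠ 0) :
    (p = 0 ∧ m = 0) ∨ (0 < p ∧ (m = p ∨ m = p + 1)) := by
  by_contra hc
  exact h (delAm_eq_zero a c hc)

/-- Minors of the bidiagonal-type matrix `delAm` are nonnegative. -/
lemma delAm_minor_nonneg (a c : ℝ) (ha : 0 ≤ a) (hc : 0 ≤ c) {r : ℕ} (σf τ : Fin r → ℕ)
    (hσ : StrictMono σf) (hτ : StrictMono τ) :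
    0 ≤ (Matrix.of fun i j : Fin r => delAm a c (σf i) (τ j)).det := by
  rw [det_staircase _ (fun i i' j j' hii hne hne' => ?_)]
  · exact Finset.prod_nonneg fun i _ => delAm_nonneg a c ha hc _ _
  · have h1 := delAm_ne_zero a c (show delAm a c (σf i) (τ j) ≠ 0 from hne)
    have h2 := delAm_ne_zero a c (show delAm a c (σf i') (τ j') ≠ 0 from hne')
    have hσii : σf i < σf i' := hσ hii
    by_contra hjj
    have : τ j' < τ j := hτ (lt_of_not_ge hjj)
    omega

lemma genDelannoy_minor_nonneg (a b c : ℝ) (ha : 0 ≤ a) (hb : 0 ≤ b) (hc : 0 ≤ c) :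
    ∀ N r, 1 ≤ r → ∀ ρ κ : Fin r → ℕ, StrictMono ρ → StrictMono κ → (∀ j, κ j ≤ N) →
      0 ≤ (Matrix.of fun i j : Fin r => genDelannoy a b c (ρ i) (κ j)).det := by
  intro N
  induction N using Nat.strong_induction_on with
  | _ N IH =>
  -- Step C : minors of `delDm` with columns bounded by `N`
  have stepD : ∀ r, 1 ≤ r → ∀ τ κ : Fin r → ℕ, StrictMono τ → StrictMono κ →
      (∀ j, κ j ≤ N) →
      0 ≤ (Matrix.of fun i j : Fin r => delDm a b c (τ i) (κ j)).det := by
    intro r hr τ κ hτ hκ hκN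
    obtain ⟨r', rfl⟩ : ∃ r', r = r' + 1 := ⟨r - 1, by omega⟩
    by_cases hκ0 : κ 0 = 0
    · by_cases hτ0 : τ 0 = 0
      · -- expand along the first column
        rw [Matrix.det_succ_column_zero, Finset.sum_eq_single 0]
        · have h00 : (Matrix.of fun i j : Fin (r' + 1) => delDm a b c (τ i) (κ j)) 0 0 = 1 := by
            simp only [Matrix.of_apply, hτ0, hκ0]
            rfl
          rw [h00]
          simp only [Fin.val_zero, pow_zero, one_mul, Fin.succAbove_zero]
          rcases Nat.eq_zero_or_pos r' with hr' | hr'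
          · subst hr'
            rw [Matrix.det_fin_zero]
            exact zero_le_one
          · have hτpos : ∀ i : Fin r', 0 < τ i.succ := by
              intro i
              have : τ 0 < τ i.succ := hτ (Fin.succ_pos i)
              omega
            have hκpos : ∀ j : Fin r', 0 < κ j.succ := by
              intro j
              have : κ 0 < κ j.succ := hκ (Fin.succ_pos j)
              omega
            have hsub : ((Matrix.of fun i j : Fin (r' + 1) => delDm a b c (τ i) (κ j)).submatrix
                Fin.succ Fin.succ) =
                Matrix.of fun i j : Fin r' =>
                  genDelannoy a b c (τ i.succ - 1) (κ j.succ - 1) := by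
              ext i j
              exact delDm_pos_pos a b c _ _ (hτpos i) (hκpos j)
            rw [hsub]
            have hN1 : N - 1 < N := by
              have h1 := hκpos ⟨0, hr'⟩
              have h2 := hκN (Fin.succ ⟨0, hr'⟩)
              omega
            refine IH (N - 1) hN1 r' hr' _ _ ?_ ?_ ?_
            · intro x y hxy
              have h1 := hτ (show x.succ < y.succ from Fin.succ_lt_succ_iff.2 hxy)
              have h2 := hτpos x
              show τ x.succ - 1 < τ y.succ - 1
              omega
            · intro x y hxy
              have h1 := hκ (show x.succ < y.succ from Fin.succ_lt_succ_iff.2 hxy)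
              have h2 := hκpos x
              show κ x.succ - 1 < κ y.succ - 1
              omega
            · intro j
              have := hκN j.succ
              show κ j.succ - 1 ≤ N - 1
              omega
        · intro i _ hi
          have hcol : (Matrix.of fun i j : Fin (r' + 1) => delDm a b c (τ i) (κ j)) i 0 = 0 := by
            have h1 : 0 < τ i := by
              have : τ 0 < τ i := hτ (Fin.pos_of_ne_zero hi)
              omega
            simp only [Matrix.of_apply, hκ0]
            exact delDm_zero_right a b c _ h1
          rw [hcol]
          ring
        · intro h
          exact absurd (Finset.mem_univ _) h
      · -- first column vanishes
        have : (Matrix.of fun i j : Fin (r' + 1) => delDm a b c (τ i) (κ j)).det = 0 := by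
          refine Matrix.det_eq_zero_of_column_eq_zero 0 fun i => ?_
          have h1 : 0 < τ i := by
            have : τ 0 ≤ τ i := hτ.monotone (Fin.zero_le i)
            omega
          simp only [Matrix.of_apply, hκ0]
          exact delDm_zero_right a b c _ h1
        rw [this]
    · by_cases hτ0 : τ 0 = 0
      · -- first row vanishes
        have : (Matrix.of fun i j : Fin (r' + 1) => delDm a b c (τ i) (κ j)).det = 0 := by
          refine Matrix.det_eq_zero_of_row_eq_zero 0 fun j => ?_
          have h1 : 0 < κ j := by
            have : κ 0 ≤ κ j := hκ.monotone (Fin.zero_le j)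
            omega
          simp only [Matrix.of_apply, hτ0]
          exact delDm_zero_left a b c _ h1
        rw [this]
      · -- all entries are genDelannoy values with shifted indices
        have hτpos : ∀ i, 0 < τ i := by
          intro i
          have : τ 0 ≤ τ i := hτ.monotone (Fin.zero_le i)
          omega
        have hκpos : ∀ j, 0 < κ j := by
          intro j
          have : κ 0 ≤ κ j := hκ.monotone (Fin.zero_le j)
          omega
        have hsub : (Matrix.of fun i j : Fin (r' + 1) => delDm a b c (τ i) (κ j)) =
            Matrix.of fun i j : Fin (r' + 1) =>
              genDelannoy a b c (τ i - 1) (κ j - 1) := by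
          ext i j
          exact delDm_pos_pos a b c _ _ (hτpos i) (hκpos j)
        rw [hsub]
        have hN1 : N - 1 < N := by
          have h1 := hκpos 0
          have h2 := hκN 0
          omega
        refine IH (N - 1) hN1 (r' + 1) hr _ _ ?_ ?_ ?_
        · intro x y hxy
          have h1 := hτ hxy
          have h2 := hτpos x
          show τ x - 1 < τ y - 1
          omega
        · intro x y hxy
          have h1 := hκ hxy
          have h2 := hκpos x
          show κ x - 1 < κ y - 1
          omega
        · intro j
          have := hκN j
          show κ j - 1 ≤ N - 1
          omega
  -- Step B : minors of `delG` with columns bounded by `N`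
  have stepG : ∀ r, 1 ≤ r → ∀ σf κ : Fin r → ℕ, StrictMono σf → StrictMono κ →
      (∀ j, κ j ≤ N) →
      0 ≤ (Matrix.of fun i j : Fin r => delG a b c (σf i) (κ j)).det := by
    intro r hr σf κ hσ hκ hκN
    set M₂ := σf ⟨r - 1, by omega⟩ with hM₂
    have hσle : ∀ i, σf i ≤ M₂ := by
      intro i
      exact hσ.monotone (by rw [Fin.le_def]; exact (show (i : ℕ) ≤ r - 1 from by omega))
    have hfact : (Matrix.of fun i j : Fin r => delG a b c (σf i) (κ j)) =
        (Matrix.of fun (i : Fin r) (p : Fin (M₂ + 1)) => delAm a c (σf i) (p : ℕ)) *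
        (Matrix.of fun (p : Fin (M₂ + 1)) (j : Fin r) => delDm a b c (p : ℕ) (κ j)) := by
      ext i j
      rw [Matrix.mul_apply]
      simp only [Matrix.of_apply]
      rw [Fin.sum_univ_eq_sum_range (fun p => delAm a c (σf i) p * delDm a b c p (κ j)) (M₂ + 1)]
      exact delG_eq_sum a b c (σf i) (κ j) M₂ (hσle i)
    rw [hfact, cauchyBinet]
    refine Finset.sum_nonneg fun g hg => ?_
    rw [Finset.mem_filter] at hg
    have hg' : StrictMono (fun p => ((g p : ℕ))) := fun x y hxy => hg.2 hxy
    exact mul_nonneg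
      (delAm_minor_nonneg a c ha hc σf (fun p => (g p : ℕ)) hσ hg')
      (stepD r hr (fun p => (g p : ℕ)) κ hg' hκ hκN)
  -- Step A : minors of genDelannoy
  intro r hr ρ κ hρ hκ hκN
  set M₁ := ρ ⟨r - 1, by omega⟩ with hM₁
  have hρle : ∀ i, ρ i ≤ M₁ := by
    intro i
    exact hρ.monotone (by rw [Fin.le_def]; exact (show (i : ℕ) ≤ r - 1 from by omega))
  have hfact : (Matrix.of fun i j : Fin r => genDelannoy a b c (ρ i) (κ j)) =
      (Matrix.of fun (i : Fin r) (m : Fin (M₁ + 1)) => toeplitz (fun n => b ^ n) (ρ i) (m : ℕ)) *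
      (Matrix.of fun (m : Fin (M₁ + 1)) (j : Fin r) => delG a b c (m : ℕ) (κ j)) := by
    ext i j
    rw [Matrix.mul_apply]
    simp only [Matrix.of_apply]
    rw [Fin.sum_univ_eq_sum_range
      (fun m => toeplitz (fun n => b ^ n) (ρ i) m * delG a b c m (κ j)) (M₁ + 1)]
    rw [genDelannoy_eq_sum a b c (ρ i) (κ j)]
    have hcongr : ∀ m ∈ Finset.range (ρ i + 1),
        b ^ (ρ i - m) * delG a b c m (κ j)
          = toeplitz (fun n => b ^ n) (ρ i) m * delG a b c m (κ j) := by
      intro m hm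
      rw [Finset.mem_range] at hm
      rw [show toeplitz (fun n => b ^ n) (ρ i) m = b ^ (ρ i - m) from by
        simp only [toeplitz]; rw [if_pos (by omega)]]
    rw [Finset.sum_congr rfl hcongr]
    refine Finset.sum_subset (Finset.range_subset_range.2 (by have := hρle i; omega))
      fun x _ hx => ?_
    rw [Finset.mem_range] at hx
    rw [show toeplitz (fun n => b ^ n) (ρ i) x = 0 from by
      simp only [toeplitz]; rw [if_neg (by omega)]]
    ring
  rw [hfact, cauchyBinet]
  refine Finset.sum_nonneg fun g hg => ?_
  rw [Finset.mem_filter] at hg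
  have hg' : StrictMono (fun m => ((g m : ℕ))) := fun x y hxy => hg.2 hxy
  exact mul_nonneg
    (toeplitz_pow_minor_nonneg b hb ρ (fun m => (g m : ℕ)) hρ hg')
    (stepG r hr (fun m => (g m : ℕ)) κ hg' hκ hκN)

end Auxiliary

/-- **Proposition (generalized Delannoy triangle is totally positive).**
For nonnegative reals `a, b, c`, the generalized Delannoy triangle
`D_w(a,b,c)` is totally positive. -/
theorem genDelannoy_totallyPositive (a b c : ℝ)
    (ha : 0 ≤ a) (hb : 0 ≤ b) (hc : 0 ≤ c) :
    TPReal (genDelannoy a b c) := by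
  intro r hr ρ κ hρ hκ
  exact genDelannoy_minor_nonneg a b c ha hb hc (κ ⟨r - 1, by omega⟩) r hr ρ κ hρ hκ
    (fun j => hκ.monotone (by rw [Fin.le_def]; exact (show (j : ℕ) ≤ r - 1 from by omega)))
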